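/- Cayley's formula: for every n ≥ 1, the number of simple graphs on the labeled vertex set {1, …, n} that are trees equals n^{n−2} (with the exponent n−2 truncated at 0 when n ≤ 2). -/

import Mathlib

namespace Cayley
open Function SimpleGraph

variable {n : ℕ}

/-- `p` is a parent function rooted at `ρ`. -/
def IsRooted (p : Fin n → Fin n) (ρ : Fin n) : Prop :=
  p ρ = ρ ∧ ∀ v, ∃ k, p^[k] v = ρ

/-- height of `v`: least number of parent steps to reach the root. -/
noncomputable def ht (p : Fin n → Fin n) (ρ v : Fin n) : ℕ :=
  sInf {k | p^[k] v = ρ}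

lemma ht_spec {p : Fin n → Fin n} {ρ : Fin n} (hp : IsRooted p ρ) (v : Fin n) :
    p^[ht p ρ v] v = ρ :=
  Nat.sInf_mem (hp.2 v)

lemma ht_le {p : Fin n → Fin n} {ρ v : Fin n} {k : ℕ} (h : p^[k] v = ρ) :
    ht p ρ v ≤ k := Nat.sInf_le h

lemma ht_root {p : Fin n → Fin n} {ρ : Fin n} : ht p ρ ρ = 0 :=
  Nat.le_zero.mp (ht_le (by simp))

lemma ht_pos {p : Fin n → Fin n} {ρ v : Fin n} (hp : IsRooted p ρ) (hv : v ≠ ρ) :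
    0 < ht p ρ v := by
  rcases Nat.eq_zero_or_pos (ht p ρ v) with h | h
  · exfalso
    rcases Nat.sInf_eq_zero.mp h with h' | h'
    · exact hv (by simpa using h')
    · obtain ⟨k, hk⟩ := hp.2 v
      have : k ∈ ({k | p^[k] v = ρ} : Set ℕ) := hk
      rw [h'] at this
      exact this
  · exact h

lemma ht_parent {p : Fin n → Fin n} {ρ : Fin n} (hp : IsRooted p ρ) {v : Fin n}
    (hv : v ≠ ρ) : ht p ρ v = ht p ρ (p v) + 1 := by
  have h1 : p^[ht p ρ v] v = ρ := ht_spec hp v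
  have hpos : 0 < ht p ρ v := ht_pos hp hv
  obtain ⟨m, hm⟩ : ∃ m, ht p ρ v = m + 1 := ⟨ht p ρ v - 1, by omega⟩
  have h2 : p^[m] (p v) = ρ := by
    rw [← Function.iterate_succ_apply]; rw [hm] at h1; exact h1
  have h3 : ht p ρ (p v) ≤ m := ht_le h2
  have h4 : m ≤ ht p ρ (p v) := by
    by_contra hlt
    push_neg at hlt
    have : p^[ht p ρ (p v) + 1] v = ρ := by
      rw [Function.iterate_succ_apply]; exact ht_spec hp (p v)
    have := ht_le this
    omega
  omega

lemma parent_ne {p : Fin n → Fin n} {ρ : Fin n} (hp : IsRooted p ρ) {v : Fin n}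
    (hv : v ≠ ρ) : p v ≠ v := by
  intro h
  have : ∀ k, p^[k] v = v := by
    intro k; induction k with
    | zero => rfl
    | succ k ih => rw [Function.iterate_succ_apply, h, ih]
  obtain ⟨k, hk⟩ := hp.2 v
  rw [this k] at hk
  exact hv hk

lemma ht_parent_lt {p : Fin n → Fin n} {ρ : Fin n} (hp : IsRooted p ρ) {v : Fin n}
    (hv : v ≠ ρ) : ht p ρ (p v) < ht p ρ v := by
  rw [ht_parent hp hv]; omega


/-- The tree associated to a rooted parent function. -/
def graphOf (p : Fin n → Fin n) (ρ : Fin n) : SimpleGraph (Fin n) :=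
  SimpleGraph.fromRel (fun v w => v ≠ ρ ∧ p v = w)

lemma graphOf_adj {p : Fin n → Fin n} {ρ : Fin n} (hp : IsRooted p ρ) {v w : Fin n} :
    (graphOf p ρ).Adj v w ↔ (v ≠ ρ ∧ p v = w) ∨ (w ≠ ρ ∧ p w = v) := by
  unfold graphOf
  rw [SimpleGraph.fromRel_adj]
  constructor
  · rintro ⟨-, h⟩; exact h
  · rintro (⟨h1, h2⟩ | ⟨h1, h2⟩) <;>
      exact ⟨by rintro rfl; exact parent_ne hp h1 h2, by tauto⟩

lemma graphOf_adj_parent {p : Fin n → Fin n} {ρ : Fin n} (hp : IsRooted p ρ) {v : Fin n}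
    (hv : v ≠ ρ) : (graphOf p ρ).Adj v (p v) :=
  (graphOf_adj hp).mpr (Or.inl ⟨hv, rfl⟩)

noncomputable def walkToRoot (p : Fin n → Fin n) (ρ : Fin n) (hp : IsRooted p ρ) :
    (v : Fin n) → (graphOf p ρ).Walk v ρ := fun v =>
  if h : v = ρ then (Walk.nil : (graphOf p ρ).Walk ρ ρ).copy h.symm rfl
  else Walk.cons (graphOf_adj_parent hp h) (walkToRoot p ρ hp (p v))
termination_by v => ht p ρ v
decreasing_by exact ht_parent_lt hp h

lemma ht_le_of_mem_support_walkToRoot {p : Fin n → Fin n} {ρ : Fin n} (hp : IsRooted p ρ)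
    (v : Fin n) : ∀ w ∈ (walkToRoot p ρ hp v).support, ht p ρ w ≤ ht p ρ v := by
  intro w hw
  rw [walkToRoot] at hw
  split_ifs at hw with h
  · simp only [Walk.support_copy, Walk.support_nil, List.mem_singleton] at hw
    subst hw; subst h; exact le_refl _
  · rw [Walk.support_cons] at hw
    rcases List.mem_cons.mp hw with rfl | hw
    · exact le_refl _
    · exact le_trans (ht_le_of_mem_support_walkToRoot hp (p v) w hw)
        (le_of_lt (ht_parent_lt hp h))
termination_by ht p ρ v
decreasing_by exact ht_parent_lt hp h

lemma walkToRoot_isPath {p : Fin n → Fin n} {ρ : Fin n} (hp : IsRooted p ρ)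
    (v : Fin n) : (walkToRoot p ρ hp v).IsPath := by
  rw [walkToRoot]
  split_ifs with h
  · simp
  · refine Walk.IsPath.cons (walkToRoot_isPath hp (p v)) ?_
    intro hmem
    have := ht_le_of_mem_support_walkToRoot hp (p v) v hmem
    have := ht_parent_lt hp h
    omega
termination_by ht p ρ v
decreasing_by exact ht_parent_lt hp h

lemma graphOf_connected {p : Fin n → Fin n} {ρ : Fin n} (hp : IsRooted p ρ) :
    (graphOf p ρ).Connected := by
  have : Nonempty (Fin n) := ⟨ρ⟩
  refine ⟨fun u v => ?_⟩
  exact (Walk.reachable (walkToRoot p ρ hp u)).trans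
    (Walk.reachable (walkToRoot p ρ hp v)).symm

lemma graphOf_isAcyclic {p : Fin n → Fin n} {ρ : Fin n} (hp : IsRooted p ρ) :
    (graphOf p ρ).IsAcyclic := by
  intro v c hc
  obtain ⟨u, hu, hmax⟩ :
      ∃ u ∈ c.support.toFinset, ∀ w ∈ c.support.toFinset, ht p ρ w ≤ ht p ρ u :=
    c.support.toFinset.exists_max_image (ht p ρ) ⟨v, by simp⟩
  rw [List.mem_toFinset] at hu
  have hmax' : ∀ w ∈ c.support, ht p ρ w ≤ ht p ρ u := fun w hw =>
    hmax w (List.mem_toFinset.mpr hw)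
  -- rotate the cycle to start at u
  set c' : (graphOf p ρ).Walk u u := c.rotate u hu with hc'def
  have hcyc : c'.IsCycle := hc.rotate hu
  have hsupp : ∀ w ∈ c'.support, ht p ρ w ≤ ht p ρ u := by
    intro w hw
    rw [c'.support_eq_cons] at hw
    rcases List.mem_cons.mp hw with rfl | hw
    · exact le_refl _
    · have : w ∈ c.support.tail := (Walk.support_rotate c u hu).mem_iff.mp hw
      exact hmax' w (List.mem_of_mem_tail this)
  clear_value c'
  clear hc'def hmax hmax' hu hc
  -- u is not the root: if u = ρ then all support has ht 0... handle inside
  cases c' with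
  | nil => exact hcyc.ne_nil rfl
  | cons hadj q =>
    rename_i x
    have hlen : 3 ≤ (Walk.cons hadj q).length := hcyc.three_le_length
    rw [Walk.cons_isCycle_iff] at hcyc
    obtain ⟨hq, hedge⟩ := hcyc
    -- x = p u
    have hx : x ∈ (Walk.cons hadj q).support := by
      rw [Walk.support_cons]; exact List.mem_cons_of_mem _ q.start_mem_support
    have hxu : ht p ρ x ≤ ht p ρ u := hsupp x hx
    have hxpu : x = p u ∧ u ≠ ρ := by
      rcases (graphOf_adj hp).mp hadj with ⟨h1, h2⟩ | ⟨h1, h2⟩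
      · exact ⟨h2.symm, h1⟩
      · exfalso; rw [ht_parent hp h1, h2] at hxu; omega
    obtain ⟨hxpu, huρ⟩ := hxpu
    -- last dart of q
    have hqlen : 0 < q.length := by
      rw [Walk.length_cons] at hlen; omega
    have hdne : q.darts ≠ [] := by
      intro h
      have := q.length_darts
      rw [h] at this
      simp at this
      omega
    set d := q.darts.getLast hdne with hd
    have hdsnd : d.snd = u := by rw [hd, Walk.getLast_darts_eq_lastDart]; rfl
    have hdmem : d ∈ q.darts := List.getLast_mem hdne
    have hdfst : d.fst ∈ q.support := Walk.dart_fst_mem_support_of_mem_darts q hdmem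
    have hdfst' : ht p ρ d.fst ≤ ht p ρ u := by
      apply hsupp
      rw [Walk.support_cons]
      exact List.mem_cons_of_mem _ hdfst
    have hdadj : (graphOf p ρ).Adj d.fst d.snd := d.adj
    rw [hdsnd] at hdadj
    have hdx : d.fst = p u := by
      rcases (graphOf_adj hp).mp hdadj with ⟨h1, h2⟩ | ⟨h1, h2⟩
      · exfalso; rw [ht_parent hp h1, h2] at hdfst'; omega
      · exact h2.symm
    -- the last edge of q is s(u, x), contradiction
    apply hedge
    have : d.edge ∈ q.edges := List.mem_map_of_mem hdmem
    have hde : d.edge = s(u, x) := by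
      have : d.toProd = (x, u) := by
        have h1 : d.toProd.1 = x := by rw [hdx, ← hxpu]
        exact Prod.ext h1 hdsnd
      rw [SimpleGraph.Dart.edge, this, Sym2.eq_swap]
    rwa [hde] at this

section TreeToPar

variable {G : SimpleGraph (Fin n)}

/-- The unique path between two vertices in a tree. -/
noncomputable def thePath (hT : G.IsTree) (v w : Fin n) : G.Walk v w :=
  (hT.existsUnique_path v w).exists.choose

lemma thePath_isPath (hT : G.IsTree) (v w : Fin n) : (thePath hT v w).IsPath :=
  (hT.existsUnique_path v w).exists.choose_spec

lemma thePath_unique (hT : G.IsTree) {v w : Fin n} {q : G.Walk v w} (hq : q.IsPath) :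
    q = thePath hT v w := by
  have h1 := hT.existsUnique_path v w
  exact (h1.unique hq (thePath_isPath hT v w))

lemma thePath_self (hT : G.IsTree) (v : Fin n) : thePath hT v v = Walk.nil :=
  (thePath_unique hT (Walk.IsPath.nil)).symm

/-- Parent function of a tree with root `ρ`. -/
noncomputable def parOf (hT : G.IsTree) (ρ v : Fin n) : Fin n :=
  (thePath hT v ρ).getVert 1

lemma parOf_root (hT : G.IsTree) (ρ : Fin n) : parOf hT ρ ρ = ρ := by
  unfold parOf
  rw [thePath_self]
  rfl

lemma thePath_cons (hT : G.IsTree) {ρ v : Fin n} (hv : v ≠ ρ) :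
    ∃ (y : Fin n) (h : G.Adj v y) (q : G.Walk y ρ),
      thePath hT v ρ = Walk.cons h q ∧ parOf hT ρ v = y ∧ q = thePath hT y ρ := by
  cases hP : thePath hT v ρ with
  | nil => exact absurd rfl hv
  | cons h q =>
    refine ⟨_, h, q, rfl, ?_, ?_⟩
    · unfold parOf
      rw [hP, Walk.getVert_cons_succ, Walk.getVert_zero]
    · apply thePath_unique
      have := thePath_isPath hT v ρ
      rw [hP] at this
      exact this.of_cons

lemma parOf_adj (hT : G.IsTree) {ρ v : Fin n} (hv : v ≠ ρ) : G.Adj v (parOf hT ρ v) := by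
  obtain ⟨y, h, q, -, hy, -⟩ := thePath_cons hT hv
  rwa [hy]

lemma parOf_isRooted (hT : G.IsTree) (ρ : Fin n) : IsRooted (parOf hT ρ) ρ := by
  refine ⟨parOf_root hT ρ, ?_⟩
  suffices h : ∀ (N : ℕ) (v : Fin n), (thePath hT v ρ).length ≤ N →
      ∃ k, (parOf hT ρ)^[k] v = ρ by
    intro v; exact h (thePath hT v ρ).length v le_rfl
  intro N
  induction N with
  | zero =>
    intro v hv
    by_cases h : v = ρ
    · exact ⟨0, h⟩
    · obtain ⟨y, hadj, q, hP, -, -⟩ := thePath_cons hT h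
      rw [hP] at hv
      simp [Walk.length_cons] at hv
  | succ N ih =>
    intro v hv
    by_cases h : v = ρ
    · exact ⟨0, h⟩
    · obtain ⟨y, hadj, q, hP, hy, hq⟩ := thePath_cons hT h
      have hlen : (thePath hT y ρ).length ≤ N := by
        rw [← hq]
        rw [hP, Walk.length_cons] at hv
        omega
      obtain ⟨k, hk⟩ := ih y hlen
      exact ⟨k + 1, by rw [Function.iterate_succ_apply, hy, hk]⟩

/-- In a tree, for any edge `{v, w}`, either `w` is `v`'s parent or vice versa. -/
lemma adj_par_or (hT : G.IsTree) {ρ v w : Fin n} (hadj : G.Adj v w) :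
    (v ≠ ρ ∧ parOf hT ρ v = w) ∨ (w ≠ ρ ∧ parOf hT ρ w = v) := by
  by_cases hv : v ∈ (thePath hT w ρ).support
  · -- v is on the path from w to ρ; then parOf w = v
    have hwρ : w ≠ ρ := by
      rintro rfl
      rw [thePath_self] at hv
      simp only [Walk.support_nil, List.mem_singleton] at hv
      exact G.ne_of_adj hadj hv
    right
    refine ⟨hwρ, ?_⟩
    set P := thePath hT w ρ with hPdef
    have hPpath : P.IsPath := thePath_isPath hT w ρ
    -- takeUntil equals the single edge
    have ht1 : (P.takeUntil v hv).IsPath := hPpath.takeUntil hv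
    have hs1 : (Walk.cons hadj.symm Walk.nil : G.Walk w v).IsPath := by
      simp [Walk.isPath_def, hadj.ne']
    have heq : (⟨P.takeUntil v hv, ht1⟩ : G.Path w v) = ⟨Walk.cons hadj.symm Walk.nil, hs1⟩ :=
      hT.IsAcyclic.path_unique _ _
    have heq' : P.takeUntil v hv = Walk.cons hadj.symm Walk.nil := congrArg Subtype.val heq
    have hsplit := P.take_spec hv
    rw [heq'] at hsplit
    have : P = Walk.cons hadj.symm (P.dropUntil v hv) := by
      conv_lhs => rw [← hsplit]
      rw [Walk.cons_append, Walk.nil_append]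
    unfold parOf
    rw [← hPdef, this, Walk.getVert_cons_succ, Walk.getVert_zero]
  · -- v not on the path from w; then cons gives the path from v
    left
    have hvρ : v ≠ ρ := by
      rintro rfl
      exact hv (Walk.end_mem_support _)
    refine ⟨hvρ, ?_⟩
    have hpath : (Walk.cons hadj (thePath hT w ρ)).IsPath :=
      (thePath_isPath hT w ρ).cons hv
    have := thePath_unique hT hpath
    unfold parOf
    rw [← this, Walk.getVert_cons_succ, Walk.getVert_zero]

lemma graphOf_parOf (hT : G.IsTree) (ρ : Fin n) : graphOf (parOf hT ρ) ρ = G := by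
  ext v w
  rw [graphOf_adj (parOf_isRooted hT ρ)]
  constructor
  · rintro (⟨h1, rfl⟩ | ⟨h1, rfl⟩)
    · exact parOf_adj hT h1
    · exact (parOf_adj hT h1).symm
  · intro hadj
    rcases adj_par_or hT (ρ := ρ) hadj with ⟨h1, h2⟩ | ⟨h1, h2⟩
    · exact Or.inl ⟨h1, h2⟩
    · exact Or.inr ⟨h1, h2⟩

lemma parOf_graphOf {p : Fin n → Fin n} {ρ : Fin n} (hp : IsRooted p ρ)
    (hT : (graphOf p ρ).IsTree) : parOf hT ρ = p := by
  funext v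
  by_cases h : v = ρ
  · subst h; rw [parOf_root, hp.1]
  · have hw : (walkToRoot p ρ hp v).IsPath := walkToRoot_isPath hp v
    have := thePath_unique hT hw
    unfold parOf
    rw [← this, walkToRoot]
    simp only [h, dite_false]
    rw [Walk.getVert_cons_succ, Walk.getVert_zero]

lemma graphOf_isTree {p : Fin n → Fin n} {ρ : Fin n} (hp : IsRooted p ρ) :
    (graphOf p ρ).IsTree :=
  ⟨graphOf_connected hp, graphOf_isAcyclic hp⟩

end TreeToPar


section Decode

variable (f : Fin n → Fin n)

/-- The set of periodic points of `f`. -/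
noncomputable def per : Finset (Fin n) :=
  Set.Finite.toFinset (Set.toFinite {v | ∃ k, 0 < k ∧ f^[k] v = v})

lemma mem_per {f : Fin n → Fin n} {v : Fin n} :
    v ∈ per f ↔ ∃ k, 0 < k ∧ f^[k] v = v := by
  simp [per]

lemma f_mem_per {f : Fin n → Fin n} {v : Fin n} (h : v ∈ per f) : f v ∈ per f := by
  rw [mem_per] at h ⊢
  obtain ⟨k, hk, hfk⟩ := h
  refine ⟨k, hk, ?_⟩
  rw [← Function.iterate_succ_apply, Function.iterate_succ_apply', hfk]

lemma per_injOn {f : Fin n → Fin n} : ∀ u ∈ per f, ∀ v ∈ per f, f u = f v → u = v := by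
  intro u hu v hv hfe
  rw [mem_per] at hu hv
  obtain ⟨k1, hk1, h1⟩ := hu
  obtain ⟨k2, hk2, h2⟩ := hv
  have hK1 : f^[k1 * k2] u = u := by
    rw [Function.iterate_mul]; exact Function.iterate_fixed h1 k2
  have hK2 : f^[k1 * k2] v = v := by
    rw [mul_comm, Function.iterate_mul]; exact Function.iterate_fixed h2 k1
  have hKpos : 0 < k1 * k2 := Nat.mul_pos hk1 hk2
  obtain ⟨K, hK⟩ : ∃ K, k1 * k2 = K + 1 := ⟨k1 * k2 - 1, by omega⟩
  rw [hK, Function.iterate_succ_apply] at hK1 hK2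
  rw [← hK1, ← hK2, hfe]

lemma exists_iterate_mem_per (f : Fin n → Fin n) [NeZero n] (v : Fin n) :
    ∃ j, f^[j] v ∈ per f := by
  have hcard : Fintype.card (Fin n) < Fintype.card (Fin (n + 1)) := by simp
  obtain ⟨a, b, hab, heq⟩ :=
    Fintype.exists_ne_map_eq_of_card_lt (fun j : Fin (n + 1) => f^[(j : ℕ)] v) hcard
  rcases Ne.lt_or_gt (fun h : (a : ℕ) = (b : ℕ) => hab (Fin.ext h)) with h | h
  · refine ⟨a, mem_per.mpr ⟨b - a, by omega, ?_⟩⟩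
    rw [← Function.iterate_add_apply, Nat.sub_add_cancel h.le, heq]
  · refine ⟨b, mem_per.mpr ⟨a - b, by omega, ?_⟩⟩
    rw [← Function.iterate_add_apply, Nat.sub_add_cancel h.le, ← heq]

lemma per_card_pos (f : Fin n → Fin n) [NeZero n] : 0 < (per f).card := by
  obtain ⟨j, hj⟩ := exists_iterate_mem_per f ⟨0, Nat.pos_of_ne_zero (NeZero.ne n)⟩
  exact Finset.card_pos.mpr ⟨_, hj⟩

/-- The increasing enumeration of the periodic points. -/
noncomputable def sEnum : Fin (per f).card ≃o {x // x ∈ per f} :=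
  (per f).orderIsoOfFin rfl

/-- `f` composed with the increasing enumeration. -/
noncomputable def phi : Fin (per f).card → {x // x ∈ per f} :=
  fun i => ⟨f ((sEnum f i : Fin n)), f_mem_per (sEnum f i).2⟩

lemma phi_bijective : Function.Bijective (phi f) := by
  rw [Fintype.bijective_iff_injective_and_card]
  refine ⟨fun i j hij => ?_, by simp⟩
  have := per_injOn _ (sEnum f i).2 _ (sEnum f j).2 (congrArg Subtype.val hij)
  exact (sEnum f).injective (Subtype.ext this)

noncomputable def psi : Fin (per f).card ≃ {x // x ∈ per f} :=
  Equiv.ofBijective _ (phi_bijective f)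

lemma psi_apply (i : Fin (per f).card) : psi f i = phi f i := rfl

/-- The root produced by decoding `f`. -/
noncomputable def dRoot [NeZero n] : Fin n := (phi f ⟨0, per_card_pos f⟩ : Fin n)

/-- The second marked vertex produced by decoding `f`. -/
noncomputable def dEnd [NeZero n] : Fin n :=
  (phi f ⟨(per f).card - 1, Nat.sub_lt (per_card_pos f) one_pos⟩ : Fin n)

/-- The parent function produced by decoding `f`. -/
noncomputable def dPar : Fin n → Fin n := fun v =>
  if h : v ∈ per f then
    (if ((psi f).symm ⟨v, h⟩ : Fin (per f).card).val = 0 then v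
     else (phi f ⟨((psi f).symm ⟨v, h⟩ : Fin (per f).card).val - 1,
        lt_of_le_of_lt (Nat.sub_le _ _) ((psi f).symm ⟨v, h⟩).isLt⟩ : Fin n))
  else f v

lemma dPar_eq_f {f : Fin n → Fin n} {v : Fin n} (h : v ∉ per f) : dPar f v = f v :=
  dif_neg h

lemma dPar_phi (i : Fin (per f).card) :
    dPar f (phi f i : Fin n) =
      if i.val = 0 then (phi f i : Fin n)
      else (phi f ⟨i.val - 1, lt_of_le_of_lt (Nat.sub_le _ _) i.isLt⟩ : Fin n) := by
  have h : (phi f i : Fin n) ∈ per f := (phi f i).2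
  have hsymm : ((psi f).symm ⟨(phi f i : Fin n), h⟩) = i := by
    have : (⟨(phi f i : Fin n), h⟩ : {x // x ∈ per f}) = phi f i := Subtype.ext rfl
    rw [this]
    exact Equiv.ofBijective_symm_apply_apply _ _ i
  unfold dPar
  rw [dif_pos h]
  simp only [hsymm]

lemma dPar_iterate_phi : ∀ (m : ℕ) (i : Fin (per f).card), i.val = m →
    (dPar f)^[m] (phi f i : Fin n) = (phi f ⟨0, i.pos⟩ : Fin n) := by
  intro m
  induction m with
  | zero =>
    intro i hi
    have hEq : i = ⟨0, i.pos⟩ := Fin.ext (by simpa using hi)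
    simp only [Function.iterate_zero_apply, ← hEq]
  | succ m ih =>
    intro i hi
    rw [Function.iterate_succ_apply, dPar_phi, if_neg (by omega)]
    have := ih ⟨i.val - 1, lt_of_le_of_lt (Nat.sub_le _ _) i.isLt⟩ (show i.val - 1 = m by omega)
    exact this

lemma dRooted (f : Fin n → Fin n) [NeZero n] : IsRooted (dPar f) (dRoot f) := by
  constructor
  · unfold dRoot
    rw [dPar_phi, if_pos rfl]
  · intro v
    by_cases h : v ∈ per f
    · set i := ((psi f).symm ⟨v, h⟩ : Fin (per f).card) with hi
      have hv : v = (phi f i : Fin n) := by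
        have : (psi f) i = ⟨v, h⟩ := Equiv.apply_symm_apply _ _
        rw [← psi_apply, this]
      refine ⟨i.val, ?_⟩
      rw [hv, dPar_iterate_phi f i.val i rfl]
      unfold dRoot
      congr 1
    · obtain ⟨j, hj⟩ := exists_iterate_mem_per f v
      have hmin := Nat.find_spec (⟨j, hj⟩ : ∃ j, f^[j] v ∈ per f)
      set j0 := Nat.find (⟨j, hj⟩ : ∃ j, f^[j] v ∈ per f) with hj0
      have hiter : ∀ t, t ≤ j0 → (dPar f)^[t] v = f^[t] v := by
        intro t
        induction t with
        | zero => intro _; rfl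
        | succ t iht =>
          intro ht
          rw [Function.iterate_succ_apply', Function.iterate_succ_apply',
            iht (by omega), dPar_eq_f]
          exact Nat.find_min _ (lt_of_lt_of_le (Nat.lt_succ_self t) ht)
      set w := f^[j0] v with hw
      set i := ((psi f).symm ⟨w, hmin⟩ : Fin (per f).card) with hi
      have hwphi : w = (phi f i : Fin n) := by
        have : (psi f) i = ⟨w, hmin⟩ := Equiv.apply_symm_apply _ _
        rw [← psi_apply, this]
      refine ⟨i.val + j0, ?_⟩
      rw [Function.iterate_add_apply, hiter j0 le_rfl, ← hw, hwphi,
        dPar_iterate_phi f i.val i rfl]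
      unfold dRoot
      congr 1

end Decode


section Generic

/-- Generic: iterates stay in an invariant set. -/
lemma iterate_mem_of_invariant {S : Finset (Fin n)} {g : Fin n → Fin n}
    (hmaps : ∀ v ∈ S, g v ∈ S) {v : Fin n} (hv : v ∈ S) (k : ℕ) : g^[k] v ∈ S := by
  induction k with
  | zero => exact hv
  | succ k ih => rw [Function.iterate_succ_apply']; exact hmaps _ ih

lemma iterate_cancel_of_injOn {S : Finset (Fin n)} {g : Fin n → Fin n}
    (hmaps : ∀ v ∈ S, g v ∈ S) (hinj : ∀ u ∈ S, ∀ v ∈ S, g u = g v → u = v) :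
    ∀ (k : ℕ), ∀ u ∈ S, ∀ v ∈ S, g^[k] u = g^[k] v → u = v := by
  intro k
  induction k with
  | zero => intro u _ v _ h; exact h
  | succ k ih =>
    intro u hu v hv h
    rw [Function.iterate_succ_apply, Function.iterate_succ_apply] at h
    exact hinj u hu v hv (ih (g u) (hmaps u hu) (g v) (hmaps v hv) h)

lemma mem_per_of_invariant {S : Finset (Fin n)} {g : Fin n → Fin n}
    (hmaps : ∀ v ∈ S, g v ∈ S) (hinj : ∀ u ∈ S, ∀ v ∈ S, g u = g v → u = v) :
    ∀ v ∈ S, v ∈ per g := by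
  intro v hv
  have hcard : Fintype.card (Fin n) < Fintype.card (Fin (n + 1)) := by simp
  obtain ⟨a, c, hac, heq⟩ :=
    Fintype.exists_ne_map_eq_of_card_lt (fun j : Fin (n + 1) => g^[(j : ℕ)] v) hcard
  have hval : (a : ℕ) ≠ (c : ℕ) := fun h => hac (Fin.ext h)
  -- wlog a < c
  rcases hval.lt_or_gt with h | h
  case _ =>
    refine mem_per.mpr ⟨c - a, by omega, ?_⟩
    have hsum : (a : ℕ) + ((c : ℕ) - a) = c := by omega
    have : g^[(a : ℕ)] (g^[(c : ℕ) - a] v) = g^[(a : ℕ)] v := by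
      rw [← Function.iterate_add_apply, hsum, ← heq]
    exact (iterate_cancel_of_injOn hmaps hinj a _
      (iterate_mem_of_invariant hmaps hv _) v hv this)
  case _ =>
    refine mem_per.mpr ⟨a - c, by omega, ?_⟩
    have hsum : (c : ℕ) + ((a : ℕ) - c) = a := by omega
    have : g^[(c : ℕ)] (g^[(a : ℕ) - c] v) = g^[(c : ℕ)] v := by
      rw [← Function.iterate_add_apply, hsum, heq]
    exact (iterate_cancel_of_injOn hmaps hinj c _
      (iterate_mem_of_invariant hmaps hv _) v hv this)

lemma per_subset_of_invariant {S : Finset (Fin n)} {g : Fin n → Fin n}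
    (hmaps : ∀ v ∈ S, g v ∈ S) (hreach : ∀ v, ∃ k, g^[k] v ∈ S) :
    ∀ v ∈ per g, v ∈ S := by
  intro v hv
  obtain ⟨k0, hk0, hper⟩ := mem_per.mp hv
  obtain ⟨t, ht⟩ := hreach v
  have hlater : ∀ s, t ≤ s → g^[s] v ∈ S := by
    intro s
    induction s with
    | zero => intro h; exact Nat.le_zero.mp h ▸ ht
    | succ s ih =>
      intro h
      rcases Nat.lt_or_ge t (s + 1) with h' | h'
      · rw [Function.iterate_succ_apply']
        exact hmaps _ (ih (by omega))
      · have : t = s + 1 := by omega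
        exact this ▸ ht
  have hfix : g^[k0 * (t + 1)] v = v := by
    rw [Function.iterate_mul]; exact Function.iterate_fixed hper _
  have : g^[k0 * (t + 1)] v ∈ S := hlater _ (by nlinarith)
  rwa [hfix] at this

lemma reach_of_agree {S : Finset (Fin n)} {g h : Fin n → Fin n}
    (hagree : ∀ v ∉ S, g v = h v) (hh : ∀ v, ∃ k, h^[k] v ∈ S) :
    ∀ v, ∃ k, g^[k] v ∈ S := by
  intro v
  obtain ⟨k, hk⟩ := hh v
  have hspec := Nat.find_spec (⟨k, hk⟩ : ∃ k, h^[k] v ∈ S)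
  set j0 := Nat.find (⟨k, hk⟩ : ∃ k, h^[k] v ∈ S) with hj0
  have hiter : ∀ t, t ≤ j0 → g^[t] v = h^[t] v := by
    intro t
    induction t with
    | zero => intro _; rfl
    | succ t ih =>
      intro h1
      rw [Function.iterate_succ_apply', Function.iterate_succ_apply', ih (by omega),
        hagree]
      exact Nat.find_min _ (lt_of_lt_of_le (Nat.lt_succ_self t) h1)
  exact ⟨j0, by rw [hiter j0 le_rfl]; exact hspec⟩

lemma orderIsoOfFin_congr {s t : Finset (Fin n)} (h : s = t) {k l : ℕ}
    (hs : s.card = k) (ht : t.card = l) {i : Fin k} {j : Fin l} (hij : (i : ℕ) = (j : ℕ)) :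
    ((s.orderIsoOfFin hs i : {x // x ∈ s}) : Fin n) = ((t.orderIsoOfFin ht j : {x // x ∈ t}) : Fin n) := by
  subst h; subst hs; subst ht
  obtain rfl : i = j := Fin.ext hij
  rfl

lemma orderIsoOfFin_symm_congr {s t : Finset (Fin n)} (h : s = t) {k l : ℕ}
    (hs : s.card = k) (ht : t.card = l) {v : Fin n} (hv : v ∈ s) (hv' : v ∈ t) :
    (((s.orderIsoOfFin hs).symm ⟨v, hv⟩ : Fin k) : ℕ) =
      (((t.orderIsoOfFin ht).symm ⟨v, hv'⟩ : Fin l) : ℕ) := by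
  subst h; subst hs; subst ht
  rfl

end Generic

section Encode

variable (p : Fin n → Fin n) (ρ b : Fin n)

/-- The set of vertices on the chain from `b` to the root. -/
noncomputable def mSet : Finset (Fin n) :=
  (Finset.range (ht p ρ b + 1)).image (fun j => p^[j] b)

noncomputable def mEnum : Fin (mSet p ρ b).card ≃o {x // x ∈ mSet p ρ b} :=
  (mSet p ρ b).orderIsoOfFin rfl

/-- Joyal encoding of a rooted tree with a second marked vertex. -/
noncomputable def encode : Fin n → Fin n := fun v =>
  if h : v ∈ mSet p ρ b then
    p^[ht p ρ b - (((mEnum p ρ b).symm ⟨v, h⟩ : Fin (mSet p ρ b).card) : ℕ)] b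
  else p v

variable {p ρ b}

lemma mem_mSet {v : Fin n} : v ∈ mSet p ρ b ↔ ∃ j, j ≤ ht p ρ b ∧ p^[j] b = v := by
  simp [mSet, Finset.mem_image, Finset.mem_range, Nat.lt_succ_iff]

lemma ht_iterate (hp : IsRooted p ρ) :
    ∀ j, j ≤ ht p ρ b → ht p ρ (p^[j] b) = ht p ρ b - j := by
  intro j
  induction j with
  | zero => intro _; simp
  | succ j ih =>
    intro hj
    have hne : p^[j] b ≠ ρ := by
      intro h
      have := ht_le h
      omega
    rw [Function.iterate_succ_apply', ht_parent hp hne] at *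
    have := ih (by omega)
    omega

lemma chain_injOn (hp : IsRooted p ρ) {j1 j2 : ℕ} (h1 : j1 ≤ ht p ρ b)
    (h2 : j2 ≤ ht p ρ b) (he : p^[j1] b = p^[j2] b) : j1 = j2 := by
  have e1 := ht_iterate hp j1 h1
  have e2 := ht_iterate hp j2 h2
  rw [he] at e1
  omega

lemma card_mSet (hp : IsRooted p ρ) : (mSet p ρ b).card = ht p ρ b + 1 := by
  rw [mSet, Finset.card_image_of_injOn, Finset.card_range]
  intro j1 h1 j2 h2 he
  rw [Finset.mem_coe, Finset.mem_range, Nat.lt_succ_iff] at h1 h2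
  exact chain_injOn hp h1 h2 he

lemma encode_eq_of_mem {v : Fin n} (h : v ∈ mSet p ρ b) :
    encode p ρ b v =
      p^[ht p ρ b - (((mEnum p ρ b).symm ⟨v, h⟩ : Fin (mSet p ρ b).card) : ℕ)] b :=
  dif_pos h

lemma encode_eq_of_not_mem {v : Fin n} (h : v ∉ mSet p ρ b) : encode p ρ b v = p v :=
  dif_neg h

lemma encode_mEnum (i : Fin (mSet p ρ b).card) :
    encode p ρ b ((mEnum p ρ b i : {x // x ∈ mSet p ρ b}) : Fin n) =
      p^[ht p ρ b - (i : ℕ)] b := by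
  have h := (mEnum p ρ b i).2
  rw [encode_eq_of_mem h]
  congr 2
  have : (⟨((mEnum p ρ b i : {x // x ∈ mSet p ρ b}) : Fin n), h⟩ : {x // x ∈ mSet p ρ b}) =
      mEnum p ρ b i := Subtype.ext rfl
  rw [this, OrderIso.symm_apply_apply]

lemma encode_mapsTo : ∀ v ∈ mSet p ρ b, encode p ρ b v ∈ mSet p ρ b := by
  intro v h
  rw [encode_eq_of_mem h]
  exact mem_mSet.mpr ⟨_, Nat.sub_le _ _, rfl⟩

lemma encode_injOn (hp : IsRooted p ρ) :
    ∀ u ∈ mSet p ρ b, ∀ v ∈ mSet p ρ b, encode p ρ b u = encode p ρ b v → u = v := by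
  intro u hu v hv he
  rw [encode_eq_of_mem hu, encode_eq_of_mem hv] at he
  have hcard := card_mSet (b := b) hp
  have hiu := ((mEnum p ρ b).symm ⟨u, hu⟩).isLt
  have hiv := ((mEnum p ρ b).symm ⟨v, hv⟩).isLt
  have := chain_injOn hp (Nat.sub_le _ _) (Nat.sub_le _ _) he
  have hival : (((mEnum p ρ b).symm ⟨u, hu⟩ : Fin _) : ℕ) =
      (((mEnum p ρ b).symm ⟨v, hv⟩ : Fin _) : ℕ) := by omega
  have h2 : ((mEnum p ρ b).symm ⟨u, hu⟩) = ((mEnum p ρ b).symm ⟨v, hv⟩) := Fin.ext hival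
  have h3 := congrArg (mEnum p ρ b) h2
  rw [OrderIso.apply_symm_apply, OrderIso.apply_symm_apply] at h3
  exact congrArg Subtype.val h3

lemma root_mem_mSet (hp : IsRooted p ρ) : ρ ∈ mSet p ρ b :=
  mem_mSet.mpr ⟨ht p ρ b, le_rfl, ht_spec hp b⟩

lemma per_encode (hp : IsRooted p ρ) : per (encode p ρ b) = mSet p ρ b := by
  apply Finset.ext
  intro v
  constructor
  · apply per_subset_of_invariant encode_mapsTo
    apply reach_of_agree (h := p) (fun w hw => encode_eq_of_not_mem hw)
    intro w
    exact ⟨ht p ρ w, by rw [ht_spec hp w]; exact root_mem_mSet hp⟩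
  · exact mem_per_of_invariant encode_mapsTo (encode_injOn hp) v

end Encode


section RoundtripI

variable {p : Fin n → Fin n} {ρ b : Fin n}

lemma phi_encode (hp : IsRooted p ρ) (i : Fin (per (encode p ρ b)).card) :
    ((phi (encode p ρ b) i : {x // x ∈ per (encode p ρ b)}) : Fin n) =
      p^[ht p ρ b - (i : ℕ)] b := by
  have hpm : per (encode p ρ b) = mSet p ρ b := per_encode hp
  have hlt : (i : ℕ) < (mSet p ρ b).card := by
    have h1 : (per (encode p ρ b)).card = (mSet p ρ b).card := congrArg Finset.card hpm
    have := i.isLt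
    omega
  have hcoe : ((sEnum (encode p ρ b) i : {x // x ∈ per (encode p ρ b)}) : Fin n) =
      ((mEnum p ρ b ⟨(i : ℕ), hlt⟩ : {x // x ∈ mSet p ρ b}) : Fin n) :=
    orderIsoOfFin_congr hpm rfl rfl rfl
  show encode p ρ b ((sEnum (encode p ρ b) i : {x // x ∈ per (encode p ρ b)}) : Fin n) = _
  rw [hcoe, encode_mEnum]

lemma decode_encode_root [NeZero n] (hp : IsRooted p ρ) :
    dRoot (encode p ρ b) = ρ := by
  unfold dRoot
  rw [phi_encode hp]
  simpa using ht_spec hp b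

lemma decode_encode_end [NeZero n] (hp : IsRooted p ρ) :
    dEnd (encode p ρ b) = b := by
  unfold dEnd
  rw [phi_encode hp]
  have hcard : (per (encode p ρ b)).card = ht p ρ b + 1 := by
    rw [per_encode hp]; exact card_mSet hp
  have : ht p ρ b - ((per (encode p ρ b)).card - 1) = 0 := by omega
  rw [this]
  rfl

lemma decode_encode_par (hp : IsRooted p ρ) : dPar (encode p ρ b) = p := by
  funext v
  set f := encode p ρ b with hf
  by_cases h : v ∈ per f
  · -- v is on the chain
    set j := ((psi f).symm ⟨v, h⟩ : Fin (per f).card) with hj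
    have hv : v = ((phi f j : {x // x ∈ per f}) : Fin n) := by
      have : (psi f) j = ⟨v, h⟩ := Equiv.apply_symm_apply _ _
      rw [← psi_apply, this]
    have hvchain : v = p^[ht p ρ b - (j : ℕ)] b := by rw [hv, phi_encode hp]
    have hcard : (per f).card = ht p ρ b + 1 := by
      rw [hf, per_encode hp]; exact card_mSet hp
    have hjle : (j : ℕ) ≤ ht p ρ b := by
      have := j.isLt; omega
    have hdpar : dPar f v =
        if (j : ℕ) = 0 then v
        else ((phi f ⟨(j : ℕ) - 1, lt_of_le_of_lt (Nat.sub_le _ _) j.isLt⟩ :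
          {x // x ∈ per f}) : Fin n) := by
      unfold dPar
      rw [dif_pos h]
    by_cases hj0 : (j : ℕ) = 0
    · rw [hdpar, if_pos hj0]
      have hvρ : v = ρ := by
        rw [hvchain, hj0]
        simpa using ht_spec hp b
      rw [hvρ, hp.1]
    · rw [hdpar, if_neg hj0, phi_encode hp]
      have harith : ht p ρ b - ((j : ℕ) - 1) = (ht p ρ b - (j : ℕ)) + 1 := by omega
      rw [harith, hvchain, Function.iterate_succ_apply']
  · rw [dPar_eq_f h, hf, encode_eq_of_not_mem]
    rwa [hf, per_encode hp] at h

end RoundtripI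

section RoundtripII

variable (f : Fin n → Fin n)

lemma chain_decode [NeZero n] :
    ∀ j, j ≤ (per f).card - 1 → (dPar f)^[j] (dEnd f) =
      ((phi f ⟨(per f).card - 1 - j,
        lt_of_le_of_lt (Nat.sub_le _ _) (Nat.sub_lt (per_card_pos f) one_pos)⟩ :
        {x // x ∈ per f}) : Fin n) := by
  intro j
  induction j with
  | zero => intro _; rfl
  | succ j ih =>
    intro hj
    rw [Function.iterate_succ_apply', ih (by omega), dPar_phi,
      if_neg (by simp only [Fin.val_mk]; omega)]
    congr 2

lemma ht_decode [NeZero n] :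
    ht (dPar f) (dRoot f) (dEnd f) = (per f).card - 1 := by
  have hr := dRooted f
  apply le_antisymm
  · apply ht_le
    rw [chain_decode f _ le_rfl]
    unfold dRoot
    congr 2
    exact Fin.ext (by simp)
  · by_contra hlt
    push_neg at hlt
    have hspec := ht_spec hr (dEnd f)
    rw [chain_decode f _ (by omega)] at hspec
    have : ((phi f ⟨(per f).card - 1 - ht (dPar f) (dRoot f) (dEnd f), _⟩ :
        {x // x ∈ per f}) : Fin n) = ((phi f ⟨0, per_card_pos f⟩ : {x // x ∈ per f}) : Fin n) :=
      hspec
    have h2 := Subtype.val_injective this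
    have h3 := (phi_bijective f).1 h2
    have h4 := congrArg Fin.val h3
    simp at h4
    omega

lemma mSet_decode [NeZero n] :
    mSet (dPar f) (dRoot f) (dEnd f) = per f := by
  apply Finset.ext
  intro v
  rw [mem_mSet, ht_decode]
  constructor
  · rintro ⟨j, hj, rfl⟩
    rw [chain_decode f j hj]
    exact ((phi f _).2)
  · intro h
    set i := ((psi f).symm ⟨v, h⟩ : Fin (per f).card) with hi
    have hv : v = ((phi f i : {x // x ∈ per f}) : Fin n) := by
      have : (psi f) i = ⟨v, h⟩ := Equiv.apply_symm_apply _ _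
      rw [← psi_apply, this]
    have hile : (i : ℕ) ≤ (per f).card - 1 := by
      have := i.isLt; omega
    refine ⟨(per f).card - 1 - (i : ℕ), Nat.sub_le _ _, ?_⟩
    rw [chain_decode f _ (Nat.sub_le _ _), hv]
    congr 2
    exact Fin.ext (by simp; omega)

lemma encode_decode [NeZero n] :
    encode (dPar f) (dRoot f) (dEnd f) = f := by
  funext v
  by_cases h : v ∈ per f
  · have h' : v ∈ mSet (dPar f) (dRoot f) (dEnd f) := by rw [mSet_decode]; exact h
    rw [encode_eq_of_mem h']
    have hidx : (((mEnum (dPar f) (dRoot f) (dEnd f)).symm ⟨v, h'⟩ : Fin _) : ℕ) =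
        (((sEnum f).symm ⟨v, h⟩ : Fin _) : ℕ) :=
      orderIsoOfFin_symm_congr (mSet_decode f) rfl rfl h' h
    rw [hidx, ht_decode]
    set i := ((sEnum f).symm ⟨v, h⟩ : Fin (per f).card) with hi
    have hile : (i : ℕ) ≤ (per f).card - 1 := by
      have := i.isLt; omega
    rw [chain_decode f _ (Nat.sub_le _ _)]
    have : (⟨(per f).card - 1 - ((per f).card - 1 - (i : ℕ)),
        lt_of_le_of_lt (Nat.sub_le _ _) (Nat.sub_lt (per_card_pos f) one_pos)⟩ :
        Fin (per f).card) = i := Fin.ext (by simp; omega)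
    rw [this]
    show f ((sEnum f ((sEnum f).symm ⟨v, h⟩) : {x // x ∈ per f}) : Fin n) = f v
    rw [OrderIso.apply_symm_apply]
  · have h' : v ∉ mSet (dPar f) (dRoot f) (dEnd f) := by rw [mSet_decode]; exact h
    rw [encode_eq_of_not_mem h', dPar_eq_f h]

end RoundtripII


section Assembly

/-- Trees paired with a root correspond to rooted parent functions. -/
noncomputable def equivRooted (n : ℕ) :
    ({G : SimpleGraph (Fin n) | G.Connected ∧ G.IsAcyclic} × Fin n) ≃
      {q : (Fin n → Fin n) × Fin n // IsRooted q.1 q.2} where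
  toFun x := ⟨(parOf ⟨x.1.2.1, x.1.2.2⟩ x.2, x.2), parOf_isRooted _ _⟩
  invFun q := (⟨graphOf q.1.1 q.1.2,
    ⟨graphOf_connected q.2, graphOf_isAcyclic q.2⟩⟩, q.1.2)
  left_inv x := by
    obtain ⟨⟨G, hG⟩, ρ⟩ := x
    simp only [Prod.mk.injEq]
    exact ⟨Subtype.ext (graphOf_parOf ⟨hG.1, hG.2⟩ ρ), trivial⟩
  right_inv q := by
    obtain ⟨⟨p, ρ⟩, hq⟩ := q
    simp only [Subtype.mk.injEq, Prod.mk.injEq]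
    exact ⟨parOf_graphOf hq _, trivial⟩

/-- Joyal's bijection: rooted parent functions with a second marked vertex
correspond to arbitrary functions. -/
noncomputable def equivFun (n : ℕ) [NeZero n] :
    ({q : (Fin n → Fin n) × Fin n // IsRooted q.1 q.2} × Fin n) ≃ (Fin n → Fin n) where
  toFun x := encode x.1.1.1 x.1.1.2 x.2
  invFun f := (⟨(dPar f, dRoot f), dRooted f⟩, dEnd f)
  left_inv x := by
    obtain ⟨⟨⟨p, ρ⟩, hq⟩, b⟩ := x
    simp only [Prod.mk.injEq, Subtype.mk.injEq]
    exact ⟨⟨decode_encode_par hq, decode_encode_root hq⟩, decode_encode_end hq⟩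
  right_inv f := encode_decode f

end Assembly

end Cayley

theorem cayley_formula (n : ℕ) (hn : 1 ≤ n) :
    {G : SimpleGraph (Fin n) | G.Connected ∧ G.IsAcyclic}.ncard = n ^ (n - 2) := by
  have : NeZero n := ⟨by omega⟩
  set T := {G : SimpleGraph (Fin n) | G.Connected ∧ G.IsAcyclic} with hT
  have e : (↥T × Fin n) × Fin n ≃ (Fin n → Fin n) :=
    (Equiv.prodCongr (Cayley.equivRooted n) (Equiv.refl (Fin n))).trans (Cayley.equivFun n)
  have hcard := Nat.card_congr e
  rw [Nat.card_prod, Nat.card_prod] at hcard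
  have h1 : Nat.card (Fin n) = n := by simp
  have h2 : Nat.card (Fin n → Fin n) = n ^ n := by
    rw [Nat.card_eq_fintype_card, Fintype.card_fun]
    simp
  have h3 : Nat.card ↥T = T.ncard := Nat.card_coe_set_eq T
  rw [h1, h2, h3] at hcard
  have hpow : n ^ n = n ^ (n - 2) * n * n := by
    rcases Nat.lt_or_ge n 2 with h | h
    · interval_cases n
      · norm_num
    · have : n = (n - 2) + 2 := by omega
      calc n ^ n = n ^ ((n - 2) + 2) := by rw [← this]
      _ = n ^ (n - 2) * n ^ 2 := pow_add n _ 2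
      _ = n ^ (n - 2) * n * n := by ring
  rw [hpow] at hcard
  have hn0 : 0 < n := hn
  have := Nat.eq_of_mul_eq_mul_right hn0 hcard
  exact Nat.eq_of_mul_eq_mul_right hn0 this
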